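/- Let n ∈ ℕ and α ∈ (n, n+1). Let X and Y be nonnegative random variables on the same probability space with X ≤ Y almost surely, such that Y is regularly varying with index α and P(X > x) = o(P(Y > x)) as x → ∞. Then E[X^{n+1} e^{-sX}] = o( E[Y^{n+1} e^{-sY}] ) as s → 0⁺. -/

import Mathlib

open MeasureTheory ProbabilityTheory Filter Topology Asymptotics Set Nat

/-- `tailP P Z x = P(Z > x)` as a real number. -/
noncomputable def tailP {Ω : Type*} [MeasurableSpace Ω] (P : Measure Ω) (Z : Ω → ℝ) (x : ℝ) : ℝ :=
  (P {ω | x < Z ω}).toReal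

/-- A positive measurable function `L` is slowly varying if `L(cx)/L(x) → 1` for every `c > 0`. -/
def SlowlyVarying (L : ℝ → ℝ) : Prop :=
  (∀ x > 0, 0 < L x) ∧ ∀ c > 0, Tendsto (fun x => L (c * x) / L x) atTop (𝓝 1)

/-- A nonnegative random variable `Z` is regularly varying with index `α` if
`P(Z > x) = x^{-α} L(x)` for all `x > 0`, with `L` slowly varying. -/
def RegVarying {Ω : Type*} [MeasurableSpace Ω] (P : Measure Ω) (Z : Ω → ℝ) (α : ℝ) : Prop :=
  ∃ L : ℝ → ℝ, Measurable L ∧ SlowlyVarying L ∧ ∀ x > 0, tailP P Z x = x ^ (-α) * L x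





private lemma pow_le_fact_mul_exp (k : ℕ) {x : ℝ} (hx : 0 ≤ x) : x ^ k ≤ k ! * Real.exp x := by
  have h1 : x ^ k / k ! ≤ ∑ i ∈ Finset.range (k+1), x ^ i / i ! := by
    refine Finset.single_le_sum (f := fun i => x ^ i / i !) (fun i _ => by positivity) ?_
    simp
  have h2 := Real.sum_le_exp_of_nonneg hx (k+1)
  have hk : (0:ℝ) < k ! := by positivity
  rw [div_le_iff₀ hk] at *
  nlinarith [h1, h2, Real.exp_pos x]

private lemma pow_mul_exp_neg_le (k : ℕ) {s x : ℝ} (hs : 0 < s) (hx : 0 ≤ x) :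
    x ^ k * Real.exp (-(s * x)) ≤ k ! / s ^ k := by
  have h1 : (s * x) ^ k ≤ k ! * Real.exp (s * x) := pow_le_fact_mul_exp k (by positivity)
  rw [mul_pow] at h1
  rw [Real.exp_neg, ← div_eq_mul_inv, div_le_div_iff₀ (Real.exp_pos _) (by positivity)]
  nlinarith [Real.exp_pos (s * x), pow_nonneg hx k, pow_pos hs k]

section tail

variable {Ω : Type*} [MeasurableSpace Ω] (P : Measure Ω) [IsProbabilityMeasure P] (Z : Ω → ℝ)



private lemma tailP_nonneg (x : ℝ) : 0 ≤ tailP P Z x := ENNReal.toReal_nonneg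

private lemma tailP_le_one (x : ℝ) : tailP P Z x ≤ 1 := by
  have h : P {ω | x < Z ω} ≤ 1 := prob_le_one
  simpa [tailP] using ENNReal.toReal_mono (by simp) h

private lemma tailP_anti : Antitone (tailP P Z) := by
  intro a b hab
  exact ENNReal.toReal_mono (measure_ne_top _ _)
    (measure_mono (fun ω (h : b < Z ω) => lt_of_le_of_lt hab h))

private lemma tailP_measurable : Measurable (tailP P Z) := (tailP_anti P Z).measurable

end tail

private lemma integrableOn_pow_mul_exp (k : ℕ) {s : ℝ} (hs : 0 < s) :
    IntegrableOn (fun z => z ^ k * Real.exp (-(s * z))) (Ioi (0:ℝ)) := by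
  have hint : IntegrableOn (fun z => (k ! / (s/2) ^ k) * Real.exp (-(s/2) * z)) (Ioi (0:ℝ)) :=
    (exp_neg_integrableOn_Ioi 0 (by positivity)).const_mul _
  refine Integrable.mono' hint ?_ ?_
  · have : Measurable fun z : ℝ => z ^ k * Real.exp (-(s * z)) := by
      fun_prop
    exact this.aestronglyMeasurable
  · refine (ae_restrict_iff' measurableSet_Ioi).2 (Eventually.of_forall fun z hz => ?_)
    have hz0 : (0:ℝ) ≤ z := le_of_lt hz
    have h1 : z ^ k * Real.exp (-((s/2) * z)) ≤ k ! / (s/2) ^ k :=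
      pow_mul_exp_neg_le k (by positivity) hz0
    have h2 : Real.exp (-(s * z)) = Real.exp (-((s/2) * z)) * Real.exp (-((s/2) * z)) := by
      rw [← Real.exp_add]; ring_nf
    rw [Real.norm_of_nonneg (by positivity), h2]
    calc z ^ k * (Real.exp (-((s/2) * z)) * Real.exp (-((s/2) * z)))
        = (z ^ k * Real.exp (-((s/2) * z))) * Real.exp (-((s/2) * z)) := by ring
      _ ≤ (↑k ! / (s/2) ^ k) * Real.exp (-((s/2) * z)) := by
          refine mul_le_mul_of_nonneg_right h1 (Real.exp_pos _).le
      _ = (↑k ! / (s/2) ^ k) * Real.exp (-(s/2) * z) := by ring_nf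

private lemma layercake_eq {Ω : Type*} [MeasurableSpace Ω] (P : Measure Ω) [IsProbabilityMeasure P]
    (Z : Ω → ℝ) (hZ : Measurable Z) (f : ℝ → ℝ) (hf : Measurable f)
    (hfnn : ∀ z, 0 < z → 0 ≤ f z) (hfi : IntegrableOn f (Ioi (0:ℝ))) :
    ∫ ω, (∫ z in Ioc (0:ℝ) (Z ω), f z) ∂P = ∫ z in Ioi (0:ℝ), f z * tailP P Z z := by
  set g : ℝ → ENNReal := fun z => ENNReal.ofReal (f z) with hg
  have hgmeas : Measurable g := hf.ennreal_ofReal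
  set S : Set (Ω × ℝ) := {p | p.2 < Z p.1} with hS
  have hSmeas : MeasurableSet S := measurableSet_lt measurable_snd (hZ.comp measurable_fst)
  have hw_mono : Monotone (fun x => ∫ z in Ioc (0:ℝ) x, f z) := by
    intro a b hab
    refine setIntegral_mono_set (hfi.mono_set Ioc_subset_Ioi_self) ?_ ?_
    · exact (ae_restrict_iff' measurableSet_Ioc).2 (Eventually.of_forall fun z hz => hfnn z hz.1)
    · exact HasSubset.Subset.eventuallyLE (Ioc_subset_Ioc_right hab)
  have hw_meas : Measurable (fun x => ∫ z in Ioc (0:ℝ) x, f z) := hw_mono.measurable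
  -- step 2 : pointwise identity
  have hpt : ∀ ω, ENNReal.ofReal (∫ z in Ioc (0:ℝ) (Z ω), f z)
      = ∫⁻ z in Ioi (0:ℝ), g z * (S.indicator 1 (ω, z)) := by
    intro ω
    have e1 : ∫ z in Ioc (0:ℝ) (Z ω), f z = ∫ z in Ioo (0:ℝ) (Z ω), f z :=
      (integral_Ioc_eq_integral_Ioo)
    have e2 : ENNReal.ofReal (∫ z in Ioo (0:ℝ) (Z ω), f z) = ∫⁻ z in Ioo (0:ℝ) (Z ω), g z := by
      refine ofReal_integral_eq_lintegral_ofReal (hfi.mono_set Ioo_subset_Ioi_self) ?_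
      exact (ae_restrict_iff' measurableSet_Ioo).2 (Eventually.of_forall fun z hz => hfnn z hz.1)
    have e3 : ∫⁻ z in Ioi (0:ℝ), g z * (S.indicator 1 (ω, z))
        = ∫⁻ z in Ioi (0:ℝ), (Iio (Z ω)).indicator g z := by
      refine lintegral_congr fun z => ?_
      by_cases h : z < Z ω
      · simp [Set.indicator_apply, h, hS]
      · simp [Set.indicator_apply, h, hS]
    have e4 : ∫⁻ z in Ioi (0:ℝ), (Iio (Z ω)).indicator g z = ∫⁻ z in Ioo (0:ℝ) (Z ω), g z := by
      rw [lintegral_indicator measurableSet_Iio, Measure.restrict_restrict measurableSet_Iio,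
        Set.Iio_inter_Ioi]
    rw [e1, e2, e3, e4]
  calc ∫ ω, (∫ z in Ioc (0:ℝ) (Z ω), f z) ∂P
      = (∫⁻ ω, ENNReal.ofReal (∫ z in Ioc (0:ℝ) (Z ω), f z) ∂P).toReal := by
        refine integral_eq_lintegral_of_nonneg_ae ?_ ?_
        · exact Eventually.of_forall fun ω =>
            setIntegral_nonneg measurableSet_Ioc fun z hz => hfnn z hz.1
        · exact (hw_meas.comp hZ).aestronglyMeasurable
    _ = (∫⁻ ω, (∫⁻ z in Ioi (0:ℝ), g z * (S.indicator 1 (ω, z))) ∂P).toReal :=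
        congrArg ENNReal.toReal (lintegral_congr fun ω => hpt ω)
    _ = (∫⁻ z in Ioi (0:ℝ), (∫⁻ ω, g z * (S.indicator 1 (ω, z)) ∂P)).toReal := by
        rw [lintegral_lintegral_swap]
        exact ((hgmeas.comp measurable_snd).mul
          (measurable_one.indicator hSmeas)).aemeasurable
    _ = (∫⁻ z in Ioi (0:ℝ), g z * P {ω | z < Z ω}).toReal := by
        refine congrArg ENNReal.toReal (lintegral_congr fun z => ?_)
        have hind : (fun ω => g z * S.indicator 1 (ω, z))
            = fun ω => g z * ({ω : Ω | z < Z ω}.indicator 1 ω) := by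
          funext ω; by_cases h : z < Z ω
          · simp [Set.indicator_apply, h, hS]
          · simp [Set.indicator_apply, h, hS]
        rw [hind, lintegral_const_mul _
          (measurable_one.indicator (measurableSet_lt measurable_const hZ)),
          lintegral_indicator_one (measurableSet_lt measurable_const hZ)]
    _ = ∫ z in Ioi (0:ℝ), f z * tailP P Z z := by
        rw [integral_eq_lintegral_of_nonneg_ae]
        · refine congrArg ENNReal.toReal (setLIntegral_congr_fun measurableSet_Ioi
            (fun z hz => ?_)).symm
          rw [ENNReal.ofReal_mul (hfnn z hz)]
          unfold tailP
          rw [ENNReal.ofReal_toReal (measure_ne_top _ _)]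
        · exact (ae_restrict_iff' measurableSet_Ioi).2 (Eventually.of_forall fun z hz =>
            mul_nonneg (hfnn z hz) ENNReal.toReal_nonneg)
        · exact (hf.mul (Antitone.measurable (fun a b hab =>
            ENNReal.toReal_mono (measure_ne_top _ _)
              (measure_mono (fun ω (h : b < Z ω) => lt_of_le_of_lt hab h))))).aestronglyMeasurable

private lemma integrable_h {Ω : Type*} [MeasurableSpace Ω] (P : Measure Ω) [IsProbabilityMeasure P]
    (Z : Ω → ℝ) (hZ : Measurable Z) (hZnn : ∀ ω, 0 ≤ Z ω) (k : ℕ) {s : ℝ} (hs : 0 < s) :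
    Integrable (fun ω => Z ω ^ k * Real.exp (-s * Z ω)) P := by
  refine Integrable.mono' (integrable_const ((k ! : ℝ) / s ^ k)) ?_ ?_
  · have : Measurable fun ω => Z ω ^ k * Real.exp (-s * Z ω) := by fun_prop
    exact this.aestronglyMeasurable
  · refine Eventually.of_forall fun ω => ?_
    rw [Real.norm_of_nonneg (mul_nonneg (pow_nonneg (hZnn ω) k) (Real.exp_pos _).le), neg_mul]
    exact pow_mul_exp_neg_le k hs (hZnn ω)

private lemma expect_le {Ω : Type*} [MeasurableSpace Ω] (P : Measure Ω) [IsProbabilityMeasure P]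
    (Z : Ω → ℝ) (hZ : Measurable Z) (hZnn : ∀ ω, 0 ≤ Z ω) (n : ℕ) {s : ℝ} (hs : 0 < s) :
    ∫ ω, Z ω ^ (n+1) * Real.exp (-s * Z ω) ∂P
      ≤ ∫ z in Ioi (0:ℝ), ((n+1 : ℝ) * (z ^ n * Real.exp (-(s * z)))) * tailP P Z z := by
  set f : ℝ → ℝ := fun z => (n+1 : ℝ) * (z ^ n * Real.exp (-(s * z))) with hfdef
  have hfmeas : Measurable f := by fun_prop
  have hfnn : ∀ z, 0 < z → 0 ≤ f z := fun z hz =>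
    mul_nonneg (by positivity) (mul_nonneg (pow_nonneg hz.le n) (Real.exp_pos _).le)
  have hfi : IntegrableOn f (Ioi (0:ℝ)) := (integrableOn_pow_mul_exp n hs).const_mul _
  have key : ∀ x : ℝ, 0 ≤ x → x ^ (n+1) * Real.exp (-s * x) ≤ ∫ z in Ioc (0:ℝ) x, f z := by
    intro x hx
    have hIoc : ∫ z in Ioc (0:ℝ) x, ((n+1:ℝ) * z ^ n) = x ^ (n+1) := by
      rw [← intervalIntegral.integral_of_le hx, intervalIntegral.integral_const_mul,
        integral_pow]
      push_cast
      field_simp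
      simp
    have h0 : ∫ z in Ioc (0:ℝ) x, ((n+1:ℝ) * z ^ n) * Real.exp (-s * x)
        = x ^ (n+1) * Real.exp (-s * x) := by
      rw [integral_mul_const, hIoc]
    rw [← h0]
    refine setIntegral_mono_on ?_ (hfi.mono_set Ioc_subset_Ioi_self) measurableSet_Ioc ?_
    · exact ((continuous_const.mul (continuous_pow n)).mul continuous_const).integrableOn_Ioc
    · intro z hz
      have h1 : Real.exp (-s * x) ≤ Real.exp (-(s * z)) := by
        apply Real.exp_le_exp.2
        nlinarith [hz.2, hs]
      have h2 : (0:ℝ) ≤ (n+1:ℝ) * z ^ n := mul_nonneg (by positivity) (pow_nonneg hz.1.le n)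
      calc ((n+1:ℝ) * z ^ n) * Real.exp (-s * x) ≤ ((n+1:ℝ) * z ^ n) * Real.exp (-(s * z)) :=
            mul_le_mul_of_nonneg_left h1 h2
        _ = f z := by rw [hfdef]; ring
  have hw_mono : Monotone (fun x => ∫ z in Ioc (0:ℝ) x, f z) := by
    intro a b hab
    refine setIntegral_mono_set (hfi.mono_set Ioc_subset_Ioi_self) ?_ ?_
    · exact (ae_restrict_iff' measurableSet_Ioc).2 (Eventually.of_forall fun z hz => hfnn z hz.1)
    · exact HasSubset.Subset.eventuallyLE (Ioc_subset_Ioc_right hab)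
  have hw_int : Integrable (fun ω => ∫ z in Ioc (0:ℝ) (Z ω), f z) P := by
    refine Integrable.mono' (integrable_const (∫ z in Ioi (0:ℝ), f z)) ?_ ?_
    · exact (hw_mono.measurable.comp hZ).aestronglyMeasurable
    · refine Eventually.of_forall fun ω => ?_
      rw [Real.norm_of_nonneg (setIntegral_nonneg measurableSet_Ioc fun z hz => hfnn z hz.1)]
      refine setIntegral_mono_set hfi ?_ ?_
      · exact (ae_restrict_iff' measurableSet_Ioi).2 (Eventually.of_forall fun z hz => hfnn z hz)
      · exact HasSubset.Subset.eventuallyLE Ioc_subset_Ioi_self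
  calc ∫ ω, Z ω ^ (n+1) * Real.exp (-s * Z ω) ∂P
      ≤ ∫ ω, (∫ z in Ioc (0:ℝ) (Z ω), f z) ∂P :=
        integral_mono (integrable_h P Z hZ hZnn (n+1) hs) hw_int (fun ω => key _ (hZnn ω))
    _ = ∫ z in Ioi (0:ℝ), f z * tailP P Z z :=
        layercake_eq P Z hZ f hfmeas hfnn hfi

private lemma block_int {t : ℝ → ℝ} (ht_anti : Antitone t) (ht0 : ∀ x, 0 ≤ t x)
    (ht_meas : Measurable t) (n : ℕ) {a b : ℝ} (ha : 0 < a) (hab : a ≤ b) :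
    ∫ z in Ioc a b, z ^ n * t z ≤ t a * (b ^ (n+1) / (n+1)) := by
  have hbpos : 0 < b := lt_of_lt_of_le ha hab
  have hint2' : IntegrableOn (fun z => z ^ n * t a) (Ioc a b) :=
    ((continuous_pow n).mul continuous_const).integrableOn_Ioc
  have hint1 : IntegrableOn (fun z => z ^ n * t z) (Ioc a b) := by
    refine Integrable.mono' (g := fun z => b ^ n * t a) (integrableOn_const measure_Ioc_lt_top.ne) ?_ ?_
    · exact ((measurable_id.pow_const n).mul ht_meas).aestronglyMeasurable
    · refine (ae_restrict_iff' measurableSet_Ioc).2 (Eventually.of_forall fun z hz => ?_)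
      have hz0 : 0 < z := lt_trans ha hz.1
      rw [Real.norm_of_nonneg (mul_nonneg (pow_nonneg hz0.le n) (ht0 z))]
      exact mul_le_mul (pow_le_pow_left₀ hz0.le hz.2 n) (ht_anti hz.1.le) (ht0 z)
        (pow_nonneg hbpos.le n)
  calc ∫ z in Ioc a b, z ^ n * t z ≤ ∫ z in Ioc a b, z ^ n * t a := by
        refine setIntegral_mono_on hint1 hint2' measurableSet_Ioc fun z hz => ?_
        exact mul_le_mul_of_nonneg_left (ht_anti hz.1.le) (pow_nonneg (lt_trans ha hz.1).le n)
    _ = (∫ z in Ioc a b, z ^ n) * t a := by rw [integral_mul_const]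
    _ ≤ (b ^ (n+1) / (n+1)) * t a := by
        refine mul_le_mul_of_nonneg_right ?_ (ht0 a)
        rw [← intervalIntegral.integral_of_le hab, integral_pow]
        have h1 : (0:ℝ) ≤ a ^ (n+1) := pow_nonneg ha.le _
        have h2 : (0:ℝ) < (n:ℝ) + 1 := by positivity
        rw [div_le_div_iff₀ (by push_cast; linarith) (by push_cast; linarith)]
        push_cast
        nlinarith
    _ = t a * (b ^ (n+1) / (n+1)) := by ring

private lemma karamata_upper {t : ℝ → ℝ} (ht_anti : Antitone t) (ht0 : ∀ x, 0 ≤ t x)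
    (ht_meas : Measurable t) (n : ℕ) {K x0 : ℝ} (hx0 : 1 ≤ x0) (hK : 0 < K)
    (hq : K < 2 ^ (n+1))
    (hKt : ∀ x, x0 ≤ x → t x ≤ K * t (2 * x)) :
    ∀ T, x0 ≤ T → ∫ z in Ioc x0 T, z ^ n * t z
      ≤ (K / ((n+1) * (1 - K / 2 ^ (n+1)))) * (T ^ (n+1) * t T) := by
  have hx0pos : (0:ℝ) < x0 := lt_of_lt_of_le one_pos hx0
  set q : ℝ := K / 2 ^ (n+1) with hqdef
  have hq01 : 0 < q ∧ q < 1 := by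
    constructor
    · positivity
    · rw [hqdef, div_lt_one (by positivity)]; exact hq
  set C : ℝ := K / ((n+1) * (1 - q)) with hCdef
  have hCpos : 0 < C := by
    rw [hCdef]
    have : (0:ℝ) < 1 - q := by linarith [hq01.2]
    positivity
  have hCq : C * q + K / (n+1) = C := by
    rw [hCdef]
    have h1 : (1:ℝ) - q ≠ 0 := by linarith [hq01.2]
    have h2 : ((n:ℝ)+1) ≠ 0 := by positivity
    field_simp
    ring
  have main : ∀ j : ℕ, ∀ T, x0 ≤ T → T ≤ x0 * 2 ^ (j+1) →
      ∫ z in Ioc x0 T, z ^ n * t z ≤ C * (T ^ (n+1) * t T) := by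
    intro j
    induction j with
    | zero =>
      intro T hT1 hT2
      have h2T : x0 ≤ 2 * T := by nlinarith
      calc ∫ z in Ioc x0 T, z ^ n * t z ≤ t x0 * (T ^ (n+1) / (n+1)) :=
            block_int ht_anti ht0 ht_meas n hx0pos hT1
        _ ≤ (K * t (2 * x0)) * (T ^ (n+1) / (n+1)) := by
            refine mul_le_mul_of_nonneg_right (hKt x0 le_rfl)
              (div_nonneg (pow_nonneg (lt_of_lt_of_le hx0pos hT1).le _) (by positivity))
        _ ≤ (K * t T) * (T ^ (n+1) / (n+1)) := by
            have h1 : t (2 * x0) ≤ t T := ht_anti (by simpa [mul_comm] using hT2)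
            have h2 : (0:ℝ) ≤ T ^ (n+1) / (n+1) :=
              div_nonneg (pow_nonneg (lt_of_lt_of_le hx0pos hT1).le _) (by positivity)
            exact mul_le_mul_of_nonneg_right (mul_le_mul_of_nonneg_left h1 hK.le) h2
        _ = (K / (n+1)) * (T ^ (n+1) * t T) := by ring
        _ ≤ C * (T ^ (n+1) * t T) := by
            refine mul_le_mul_of_nonneg_right ?_
              (mul_nonneg (pow_nonneg (lt_of_lt_of_le hx0pos hT1).le _) (ht0 T))
            nlinarith [hCq, hCpos.le, hq01.1]
    | succ j ih =>
      intro T hT1 hT2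
      by_cases hcase : T ≤ x0 * 2 ^ (j+1)
      · exact ih T hT1 hcase
      push_neg at hcase
      have hT2' : x0 ≤ T / 2 := by
        have : x0 * 2 ^ (j+1) ≥ x0 * 2 := by
          refine mul_le_mul_of_nonneg_left ?_ hx0pos.le
          have := one_lt_two (α := ℝ)
          calc (2:ℝ) = 2 ^ 1 := (pow_one 2).symm
            _ ≤ 2 ^ (j+1) := pow_le_pow_right₀ one_le_two (Nat.le_add_left 1 j)
        nlinarith
      have hhalf : T / 2 ≤ x0 * 2 ^ (j+1) := by
        rw [div_le_iff₀ (by norm_num : (0:ℝ) < 2)] at *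
        calc T ≤ x0 * 2 ^ (j+1+1) := hT2
          _ = x0 * 2 ^ (j+1) * 2 := by ring
      have hTpos : (0:ℝ) < T := lt_of_lt_of_le hx0pos hT1
      have hsplit : Ioc x0 T = Ioc x0 (T/2) ∪ Ioc (T/2) T := by
        rw [Set.Ioc_union_Ioc_eq_Ioc hT2' (by linarith)]
      have hint : ∀ (a b : ℝ), 0 < a → IntegrableOn (fun z => z ^ n * t z) (Ioc a b) := by
        intro a b hapos
        rcases le_or_gt a b with hab | hab
        · refine Integrable.mono' (g := fun z => b ^ n * t a)
            (integrableOn_const measure_Ioc_lt_top.ne) ?_ ?_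
          · exact ((measurable_id.pow_const n).mul ht_meas).aestronglyMeasurable
          · refine (ae_restrict_iff' measurableSet_Ioc).2 (Eventually.of_forall fun z hz => ?_)
            have hz0 : 0 < z := lt_trans hapos hz.1
            rw [Real.norm_of_nonneg (mul_nonneg (pow_nonneg hz0.le n) (ht0 z))]
            exact mul_le_mul (pow_le_pow_left₀ hz0.le hz.2 n) (ht_anti hz.1.le) (ht0 z)
              (pow_nonneg (lt_of_lt_of_le hapos hab).le n)
        · simp [Set.Ioc_eq_empty (not_lt.2 hab.le), IntegrableOn]
      have hadd : ∫ z in Ioc x0 T, z ^ n * t z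
          = (∫ z in Ioc x0 (T/2), z ^ n * t z) + ∫ z in Ioc (T/2) T, z ^ n * t z := by
        rw [hsplit]
        refine setIntegral_union ?_ measurableSet_Ioc (hint _ _ hx0pos)
          (hint _ _ (by linarith)) 
        exact Set.Ioc_disjoint_Ioc_of_le le_rfl
      have hKhalf : t (T/2) ≤ K * t T := by
        have := hKt (T/2) hT2'
        rwa [mul_div_cancel₀] at this
        norm_num
      have hpow : (T/2) ^ (n+1) = T ^ (n+1) / 2 ^ (n+1) := by
        rw [div_pow]
      have ht2nn : 0 ≤ t (T/2) := ht0 _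
      have htTnn : 0 ≤ t T := ht0 _
      calc ∫ z in Ioc x0 T, z ^ n * t z
          = (∫ z in Ioc x0 (T/2), z ^ n * t z) + ∫ z in Ioc (T/2) T, z ^ n * t z := hadd
        _ ≤ C * ((T/2) ^ (n+1) * t (T/2)) + t (T/2) * (T ^ (n+1) / (n+1)) := by
            refine add_le_add (ih (T/2) hT2' hhalf) (block_int ht_anti ht0 ht_meas n (by linarith) (by linarith))
        _ ≤ C * ((T/2) ^ (n+1) * (K * t T)) + (K * t T) * (T ^ (n+1) / (n+1)) := by
            refine add_le_add ?_ ?_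
            · refine mul_le_mul_of_nonneg_left ?_ hCpos.le
              exact mul_le_mul_of_nonneg_left hKhalf (by positivity)
            · exact mul_le_mul_of_nonneg_right hKhalf (by positivity)
        _ = (C * q + K / (n+1)) * (T ^ (n+1) * t T) := by
            rw [hpow, hqdef]
            field_simp
        _ = C * (T ^ (n+1) * t T) := by rw [hCq]
  intro T hT
  obtain ⟨j, hj⟩ := pow_unbounded_of_one_lt (T / x0) (one_lt_two (α := ℝ))
  refine main j T hT ?_
  have : T / x0 ≤ 2 ^ (j+1) := by
    refine le_trans hj.le (pow_le_pow_right₀ one_le_two (Nat.le_succ j))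
  calc T = (T / x0) * x0 := by field_simp
    _ ≤ 2 ^ (j+1) * x0 := mul_le_mul_of_nonneg_right this hx0pos.le
    _ = x0 * 2 ^ (j+1) := by ring

private lemma pow_mul_t_tendsto {t : ℝ → ℝ} (ht_anti : Antitone t) (ht0 : ∀ x, 0 ≤ t x)
    (n : ℕ) {K x0 : ℝ} (hx0 : 1 ≤ x0) (hK : 0 < K) (hq : K < 2 ^ (n+1))
    (htpos : 0 < t x0)
    (hKt : ∀ x, x0 ≤ x → t x ≤ K * t (2 * x)) :
    Tendsto (fun T => T ^ (n+1) * t T) atTop atTop := by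
  have hx0pos : (0:ℝ) < x0 := lt_of_lt_of_le one_pos hx0
  have h2p : (0:ℝ) < 2 ^ (n+1) := by positivity
  set r : ℝ := 2 ^ (n+1) / K with hr
  have hr1 : 1 < r := (one_lt_div hK).2 hq
  have hr0 : 0 < r := lt_trans one_pos hr1
  set a : ℕ → ℝ := fun j => (x0 * 2 ^ j) ^ (n+1) * t (x0 * 2 ^ j) with ha
  have hstep : ∀ j, r * a j ≤ a (j+1) := by
    intro j
    have hxj : x0 ≤ x0 * 2 ^ j := le_mul_of_one_le_right hx0pos.le (one_le_pow₀ one_le_two)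
    have e : (2 : ℝ) * (x0 * 2 ^ j) = x0 * 2 ^ (j+1) := by ring
    have h1 : t (x0 * 2 ^ j) ≤ K * t (x0 * 2 ^ (j+1)) := by
      rw [← e]; exact hKt _ hxj
    have hB : (0:ℝ) ≤ (x0 * 2 ^ j) ^ (n+1) := by positivity
    have h2 : r * a j ≤ r * ((x0 * 2 ^ j) ^ (n+1) * (K * t (x0 * 2 ^ (j+1)))) := by
      refine mul_le_mul_of_nonneg_left (mul_le_mul_of_nonneg_left h1 hB) hr0.le
    refine le_trans h2 (le_of_eq ?_)
    have e2 : (x0 * 2 ^ (j+1)) ^ (n+1) = 2 ^ (n+1) * (x0 * 2 ^ j) ^ (n+1) := by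
      rw [← e, mul_pow]
    show r * ((x0 * 2 ^ j) ^ (n+1) * (K * t (x0 * 2 ^ (j+1))))
        = (x0 * 2 ^ (j+1)) ^ (n+1) * t (x0 * 2 ^ (j+1))
    rw [e2, hr]
    field_simp
  have hgeo : ∀ j, a 0 * r ^ j ≤ a j := by
    intro j
    induction j with
    | zero => simp
    | succ j ih =>
      calc a 0 * r ^ (j+1) = r * (a 0 * r ^ j) := by ring
        _ ≤ r * a j := mul_le_mul_of_nonneg_left ih hr0.le
        _ ≤ a (j+1) := hstep j
  have ha0 : 0 < a 0 := by
    rw [ha]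
    simp only [pow_zero, mul_one]
    exact mul_pos (pow_pos hx0pos _) htpos
  rw [tendsto_atTop]
  intro M
  set M' : ℝ := (2 ^ (n+1) * max M 0 + 1) / a 0 with hM'
  obtain ⟨j1, hj1⟩ := eventually_atTop.1
    ((tendsto_pow_atTop_atTop_of_one_lt hr1).eventually_ge_atTop M')
  filter_upwards [eventually_ge_atTop (x0 * 2 ^ (j1+1))] with T hT
  have hTx0 : x0 ≤ T := le_trans (le_mul_of_one_le_right hx0pos.le (one_le_pow₀ one_le_two)) hT
  have hTpos : 0 < T := lt_of_lt_of_le hx0pos hTx0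
  set m : ℕ := ⌊T / x0⌋₊ with hm
  have hdiv : (2:ℝ) ^ (j1+1) ≤ T / x0 := (le_div_iff₀ hx0pos).2 (by linarith [hT])
  have hm1 : 2 ^ (j1+1) ≤ m := Nat.le_floor (by push_cast; linarith [hdiv])
  have hm0 : m ≠ 0 := by
    have := Nat.one_le_two_pow (n := j1+1)
    omega
  set k := Nat.log 2 m with hk
  have hk1 : j1 + 1 ≤ k := (Nat.le_log_iff_pow_le one_lt_two hm0).2 hm1
  have h2k : ((2:ℝ)) ^ k ≤ m := by exact_mod_cast Nat.pow_log_le_self 2 hm0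
  have h2k' : (m:ℝ) + 1 ≤ 2 ^ (k+1) := by
    have := Nat.lt_pow_succ_log_self one_lt_two m
    exact_mod_cast Nat.succ_le_of_lt this
  have hmT : (m:ℝ) ≤ T / x0 := Nat.floor_le (by positivity)
  have hTm : T / x0 < (m:ℝ) + 1 := Nat.lt_floor_add_one _
  have hlow : x0 * 2 ^ k ≤ T := by
    calc x0 * 2 ^ k ≤ x0 * m := mul_le_mul_of_nonneg_left h2k hx0pos.le
      _ ≤ T := (le_div_iff₀' hx0pos).1 hmT
  have hhigh : T ≤ x0 * 2 ^ (k+1) := by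
    have : T < x0 * ((m:ℝ) + 1) := by
      rw [div_lt_iff₀ hx0pos] at hTm; linarith [hTm]
    calc T ≤ x0 * ((m:ℝ) + 1) := this.le
      _ ≤ x0 * 2 ^ (k+1) := mul_le_mul_of_nonneg_left h2k' hx0pos.le
  have hcomp : a (k+1) / 2 ^ (n+1) ≤ T ^ (n+1) * t T := by
    have h1 : (x0 * 2 ^ k) ^ (n+1) ≤ T ^ (n+1) := pow_le_pow_left₀ (by positivity) hlow _
    have h2 : t (x0 * 2 ^ (k+1)) ≤ t T := ht_anti hhigh
    have e2 : (x0 * 2 ^ (k+1)) ^ (n+1) = 2 ^ (n+1) * (x0 * 2 ^ k) ^ (n+1) := by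
      have e : (2 : ℝ) * (x0 * 2 ^ k) = x0 * 2 ^ (k+1) := by ring
      rw [← e, mul_pow]
    have : a (k+1) = 2 ^ (n+1) * ((x0 * 2 ^ k) ^ (n+1) * t (x0 * 2 ^ (k+1))) := by
      show (x0 * 2 ^ (k+1)) ^ (n+1) * t (x0 * 2 ^ (k+1)) = _
      rw [e2]; ring
    rw [this]
    rw [div_le_iff₀ h2p]
    calc 2 ^ (n+1) * ((x0 * 2 ^ k) ^ (n+1) * t (x0 * 2 ^ (k+1)))
        ≤ 2 ^ (n+1) * (T ^ (n+1) * t T) := by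
          refine mul_le_mul_of_nonneg_left ?_ h2p.le
          exact mul_le_mul h1 h2 (ht0 _) (by positivity)
      _ = T ^ (n+1) * t T * 2 ^ (n+1) := by ring
  have hak : M' * a 0 ≤ a (k+1) := by
    have := hj1 (k+1) (by omega)
    calc M' * a 0 = a 0 * M' := by ring
      _ ≤ a 0 * r ^ (k+1) := mul_le_mul_of_nonneg_left this ha0.le
      _ ≤ a (k+1) := hgeo (k+1)
  have hM'a : M' * a 0 = 2 ^ (n+1) * max M 0 + 1 := by
    rw [hM']; field_simp
  refine le_trans ?_ hcomp
  rw [le_div_iff₀ h2p]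
  calc M * 2 ^ (n+1) ≤ max M 0 * 2 ^ (n+1) := by
        exact mul_le_mul_of_nonneg_right (le_max_left _ _) h2p.le
    _ ≤ 2 ^ (n+1) * max M 0 + 1 := by ring_nf; linarith
    _ = M' * a 0 := hM'a.symm
    _ ≤ a (k+1) := hak

private lemma integrableOn_Ft {t : ℝ → ℝ} (ht_meas : Measurable t) (ht0 : ∀ x, 0 ≤ t x)
    (ht1 : ∀ x, t x ≤ 1) (n : ℕ) {s : ℝ} (hs : 0 < s) {A : Set ℝ} (hA : A ⊆ Ioi 0)
    (hAm : MeasurableSet A) :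
    IntegrableOn (fun z => ((n+1:ℝ) * (z ^ n * Real.exp (-(s*z)))) * t z) A := by
  refine Integrable.mono'
    (IntegrableOn.mono_set ((integrableOn_pow_mul_exp n hs).const_mul ((n+1:ℝ))) hA) ?_ ?_
  · have : Measurable fun z => ((n+1:ℝ) * (z ^ n * Real.exp (-(s*z)))) * t z := by fun_prop
    exact this.aestronglyMeasurable
  · refine (ae_restrict_iff' hAm).2 (Eventually.of_forall fun z hz => ?_)
    have hz0 : 0 < z := hA hz
    have hnn : (0:ℝ) ≤ (n+1:ℝ) * (z ^ n * Real.exp (-(s*z))) := by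
      have := pow_nonneg hz0.le n
      positivity
    rw [Real.norm_of_nonneg (mul_nonneg hnn (ht0 z))]
    calc ((n+1:ℝ) * (z ^ n * Real.exp (-(s*z)))) * t z
        ≤ ((n+1:ℝ) * (z ^ n * Real.exp (-(s*z)))) * 1 := by
          exact mul_le_mul_of_nonneg_left (ht1 z) hnn
      _ = (n+1:ℝ) * (z ^ n * Real.exp (-(s*z))) := mul_one _

private lemma head_piece {t : ℝ → ℝ} (ht_meas : Measurable t) (ht0 : ∀ x, 0 ≤ t x)
    (ht1 : ∀ x, t x ≤ 1) (n : ℕ) {s : ℝ} (hs : 0 < s) {A : ℝ} (hA : 0 ≤ A) :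
    ∫ z in Ioc (0:ℝ) A, ((n+1:ℝ) * (z ^ n * Real.exp (-(s*z)))) * t z ≤ A ^ (n+1) := by
  have hIoc : ∫ z in Ioc (0:ℝ) A, ((n+1:ℝ) * z ^ n) = A ^ (n+1) := by
    rw [← intervalIntegral.integral_of_le hA, intervalIntegral.integral_const_mul, integral_pow]
    field_simp
    simp
  rw [← hIoc]
  refine setIntegral_mono_on
    ((integrableOn_Ft ht_meas ht0 ht1 n hs Ioc_subset_Ioi_self measurableSet_Ioc))
    ((continuous_const.mul (continuous_pow n)).integrableOn_Ioc) measurableSet_Ioc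
    fun z hz => ?_
  have hz0 : 0 < z := hz.1
  have he : Real.exp (-(s*z)) ≤ 1 := Real.exp_le_one_iff.2 (by nlinarith)
  calc ((n+1:ℝ) * (z ^ n * Real.exp (-(s*z)))) * t z
      ≤ ((n+1:ℝ) * (z ^ n * 1)) * 1 := by
        refine mul_le_mul ?_ (ht1 z) (ht0 z) ?_
        · refine mul_le_mul_of_nonneg_left ?_ (by positivity)
          exact mul_le_mul_of_nonneg_left he (pow_nonneg hz0.le n)
        · positivity
    _ = (n+1:ℝ) * z ^ n := by ring

private lemma tail_piece {t : ℝ → ℝ} (ht_meas : Measurable t) (ht_anti : Antitone t)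
    (ht0 : ∀ x, 0 ≤ t x) (ht1 : ∀ x, t x ≤ 1) (n : ℕ) {s T : ℝ} (hs : 0 < s)
    (hT : T = s⁻¹) (hT1 : 1 ≤ T) :
    ∫ z in Ioi T, ((n+1:ℝ) * (z ^ n * Real.exp (-(s*z)))) * t z
      ≤ ((2*n+2)! : ℝ) * (T ^ (n+1) * t T) := by
  have hT0 : 0 < T := lt_of_lt_of_le one_pos hT1
  have hsinv : s = T⁻¹ := by rw [hT, inv_inv]
  set c3 : ℝ := ((n+1:ℝ) * (2*n+2)!) / s ^ (2*n+2) * t T with hc3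
  have hptw : ∀ z ∈ Ioi T, ((n+1:ℝ) * (z ^ n * Real.exp (-(s*z)))) * t z
      ≤ c3 * z ^ ((-(n+2:ℕ) : ℝ)) := by
    intro z hz
    have hzT : T < z := hz
    have hz0 : 0 < z := lt_trans hT0 hzT
    have hexp : Real.exp (-(s*z)) ≤ ((2*n+2)! : ℝ) / (s*z) ^ (2*n+2) := by
      have h1 : (s*z) ^ (2*n+2) ≤ ((2*n+2)! : ℝ) * Real.exp (s*z) :=
        pow_le_fact_mul_exp _ (by positivity)
      rw [Real.exp_neg, ← one_div, div_le_div_iff₀ (Real.exp_pos _) (by positivity)]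
      nlinarith [h1]
    have htz : t z ≤ t T := ht_anti hzT.le
    have h2 : ((n+1:ℝ) * (z ^ n * Real.exp (-(s*z)))) * t z
        ≤ ((n+1:ℝ) * (z ^ n * (((2*n+2)! : ℝ) / (s*z) ^ (2*n+2)))) * t T := by
      have hfactnn : (0:ℝ) ≤ ((2*n+2)! : ℝ) / (s*z) ^ (2*n+2) := by positivity
      refine mul_le_mul ?_ htz (ht0 z) ?_
      · refine mul_le_mul_of_nonneg_left ?_ (by positivity)
        exact mul_le_mul_of_nonneg_left hexp (pow_nonneg hz0.le n)
      · have := pow_nonneg hz0.le n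
        positivity
    refine le_trans h2 (le_of_eq ?_)
    have hrw : z ^ ((-(n+2:ℕ)):ℝ) = (z ^ (n+2))⁻¹ := by
      rw [← Real.rpow_natCast z (n+2), ← Real.rpow_neg hz0.le]
    rw [hrw, hc3]
    have hz2 : z ^ (2*n+2) = z ^ n * z ^ (n+2) := by rw [← pow_add]; ring_nf
    rw [mul_pow, hz2]
    have hsne : s ≠ 0 := ne_of_gt hs
    have hzne : z ≠ 0 := ne_of_gt hz0
    field_simp
  have hint1 : IntegrableOn (fun z => ((n+1:ℝ) * (z ^ n * Real.exp (-(s*z)))) * t z) (Ioi T) :=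
    integrableOn_Ft ht_meas ht0 ht1 n hs (Ioi_subset_Ioi hT0.le) measurableSet_Ioi
  have hexplt : ((-(n+2:ℕ)):ℝ) < -1 := by push_cast; linarith
  have hint2 : IntegrableOn (fun z => c3 * z ^ ((-(n+2:ℕ)):ℝ)) (Ioi T) :=
    (integrableOn_Ioi_rpow_of_lt hexplt hT0).const_mul c3
  have hrpowval : ∫ z in Ioi T, z ^ ((-(n+2:ℕ)):ℝ) = (T ^ (n+1))⁻¹ / (n+1) := by
    rw [integral_Ioi_rpow_of_lt hexplt hT0]
    have h1 : ((-(n+2:ℕ)):ℝ) + 1 = -(((n+1:ℕ)):ℝ) := by push_cast; ring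
    rw [h1, Real.rpow_neg hT0.le, Real.rpow_natCast, neg_div_neg_eq]
    push_cast
    ring
  have hTne : T ≠ 0 := ne_of_gt hT0
  calc ∫ z in Ioi T, ((n+1:ℝ) * (z ^ n * Real.exp (-(s*z)))) * t z
      ≤ ∫ z in Ioi T, c3 * z ^ ((-(n+2:ℕ)):ℝ) :=
        setIntegral_mono_on hint1 hint2 measurableSet_Ioi hptw
    _ = c3 * ((T ^ (n+1))⁻¹ / (n+1)) := by rw [integral_const_mul, hrpowval]
    _ = ((2*n+2)! : ℝ) * (T ^ (n+1) * t T) := by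
        rw [hc3, hsinv]
        have h2 : ((T:ℝ)⁻¹) ^ (2*n+2) = (T ^ (2*n+2))⁻¹ := inv_pow T (2*n+2)
        rw [h2]
        have h3 : T ^ (2*n+2) = T ^ (n+1) * T ^ (n+1) := by rw [← pow_add]; ring_nf
        rw [h3]
        field_simp

private lemma D_lower {Ω : Type*} [MeasurableSpace Ω] (P : Measure Ω) [IsProbabilityMeasure P]
    (Y : Ω → ℝ) (hY : Measurable Y) (hYnn : ∀ ω, 0 ≤ Y ω) (n : ℕ) {s T c : ℝ} (hs : 0 < s)
    (hT : T = s⁻¹) (hT1 : 1 ≤ T) (hc : 0 ≤ c)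
    (hdiff : c * tailP P Y T ≤ tailP P Y (T/2) - tailP P Y T) :
    (Real.exp (-1) / 2 ^ (n+1)) * c * (T ^ (n+1) * tailP P Y T)
      ≤ ∫ ω, Y ω ^ (n+1) * Real.exp (-s * Y ω) ∂P := by
  have hT0 : 0 < T := lt_of_lt_of_le one_pos hT1
  have hsT : s * T = 1 := by rw [hT]; field_simp
  set E : Set Ω := {ω | T/2 < Y ω} \ {ω | T < Y ω} with hE
  have hEmeas : MeasurableSet E :=
    (measurableSet_lt measurable_const hY).diff (measurableSet_lt measurable_const hY)
  have hpt : ∀ ω ∈ E, (T/2) ^ (n+1) * Real.exp (-1) ≤ Y ω ^ (n+1) * Real.exp (-s * Y ω) := by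
    intro ω hω
    obtain ⟨h1, h2⟩ := hω
    rw [Set.mem_setOf_eq, not_lt] at h2
    have h1' : T/2 < Y ω := h1
    have hp : (T/2) ^ (n+1) ≤ Y ω ^ (n+1) := pow_le_pow_left₀ (by positivity) h1'.le _
    have he : Real.exp (-1) ≤ Real.exp (-s * Y ω) := by
      apply Real.exp_le_exp.2
      have : s * Y ω ≤ s * T := mul_le_mul_of_nonneg_left h2 hs.le
      rw [hsT] at this
      linarith
    exact mul_le_mul hp he (Real.exp_pos _).le (pow_nonneg (hYnn ω) _)
  have hPE : (P E).toReal = tailP P Y (T/2) - tailP P Y T := by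
    have hsub : {ω | T < Y ω} ⊆ {ω | T/2 < Y ω} := by
      intro ω h
      have : T/2 < T := by linarith
      exact lt_trans this h
    rw [hE, measure_diff hsub ((measurableSet_lt measurable_const hY)).nullMeasurableSet
      (measure_ne_top P _), ENNReal.toReal_sub_of_le (measure_mono hsub) (measure_ne_top P _)]
    rfl
  have hint : Integrable (fun ω => Y ω ^ (n+1) * Real.exp (-s * Y ω)) P :=
    integrable_h P Y hY hYnn (n+1) hs
  have hstep1 : ((T/2) ^ (n+1) * Real.exp (-1)) * (P E).toReal
      ≤ ∫ ω in E, Y ω ^ (n+1) * Real.exp (-s * Y ω) ∂P :=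
    setIntegral_ge_of_const_le_real hEmeas (measure_ne_top P E) hpt hint.integrableOn
  have hstep2 : ∫ ω in E, Y ω ^ (n+1) * Real.exp (-s * Y ω) ∂P
      ≤ ∫ ω, Y ω ^ (n+1) * Real.exp (-s * Y ω) ∂P :=
    setIntegral_le_integral hint (Eventually.of_forall fun ω =>
      mul_nonneg (pow_nonneg (hYnn ω) _) (Real.exp_pos _).le)
  refine le_trans ?_ (le_trans hstep1 hstep2)
  rw [hPE]
  have hpow : (T/2) ^ (n+1) = T ^ (n+1) / 2 ^ (n+1) := div_pow T 2 (n+1)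
  have h1 : c * tailP P Y T ≤ tailP P Y (T/2) - tailP P Y T := hdiff
  have hTp : (0:ℝ) ≤ T ^ (n+1) := pow_nonneg hT0.le _
  have htT : 0 ≤ tailP P Y T := ENNReal.toReal_nonneg
  calc (Real.exp (-1) / 2 ^ (n+1)) * c * (T ^ (n+1) * tailP P Y T)
      = ((T/2) ^ (n+1) * Real.exp (-1)) * (c * tailP P Y T) := by
        rw [hpow]; ring
    _ ≤ ((T/2) ^ (n+1) * Real.exp (-1)) * (tailP P Y (T/2) - tailP P Y T) := by
        refine mul_le_mul_of_nonneg_left h1 ?_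
        have : (0:ℝ) ≤ (T/2) ^ (n+1) := by positivity
        positivity


set_option maxHeartbeats 1000000 in
/-- Lemma B.1 of the paper: if `X ≤ Y` a.s., `Y` is regularly varying with index
`α ∈ (n, n+1)` and `P(X > x) = o(P(Y > x))`, then
`E[X^{n+1} e^{-sX}] = o(E[Y^{n+1} e^{-sY}])` as `s → 0⁺`. -/
theorem laplace_deriv_negligible
    {Ω : Type*} [MeasurableSpace Ω] (P : Measure Ω) [IsProbabilityMeasure P]
    (n : ℕ) (α : ℝ) (hα1 : (n : ℝ) < α) (hα2 : α < n + 1)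
    (X Y : Ω → ℝ) (hXmeas : Measurable X) (hYmeas : Measurable Y)
    (hXnn : ∀ ω, 0 ≤ X ω) (hYnn : ∀ ω, 0 ≤ Y ω)
    (hle : ∀ᵐ ω ∂P, X ω ≤ Y ω)
    (hYrv : RegVarying P Y α)
    (hXo : (fun x => tailP P X x) =o[atTop] fun x => tailP P Y x) :
    (fun s => ∫ ω, X ω ^ (n + 1) * Real.exp (-s * X ω) ∂P)
      =o[𝓝[>] (0 : ℝ)] fun s => ∫ ω, Y ω ^ (n + 1) * Real.exp (-s * Y ω) ∂P := by
  obtain ⟨L, hLmeas, ⟨hLpos, hLslow⟩, hLeq⟩ := hYrv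
  have hα0 : 0 < α := lt_of_le_of_lt (Nat.cast_nonneg n) hα1
  set t : ℝ → ℝ := tailP P Y with htdef
  set tX : ℝ → ℝ := tailP P X with htXdef
  have ht_anti : Antitone t := tailP_anti P Y
  have ht0 : ∀ x, 0 ≤ t x := tailP_nonneg P Y
  have ht1 : ∀ x, t x ≤ 1 := tailP_le_one P Y
  have ht_meas : Measurable t := tailP_measurable P Y
  have htX0 : ∀ x, 0 ≤ tX x := tailP_nonneg P X
  have htX1 : ∀ x, tX x ≤ 1 := tailP_le_one P X
  have htX_meas : Measurable tX := tailP_measurable P X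
  have htpos : ∀ x, 0 < x → 0 < t x := by
    intro x hx
    rw [hLeq x hx]
    exact mul_pos (Real.rpow_pos_of_pos hx _) (hLpos x hx)
  have hratio : ∀ c : ℝ, 0 < c →
      Tendsto (fun x => t (c * x) / t x) atTop (𝓝 (c ^ (-α))) := by
    intro c hc
    have h1 : (fun x => c ^ (-α) * (L (c * x) / L x)) =ᶠ[atTop]
        (fun x => t (c * x) / t x) := by
      filter_upwards [eventually_gt_atTop 0] with x hx
      have hcx : 0 < c * x := mul_pos hc hx
      rw [hLeq x hx, hLeq (c * x) hcx, Real.mul_rpow hc.le hx.le]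
      have hx0 : x ^ (-α) ≠ 0 := ne_of_gt (Real.rpow_pos_of_pos hx _)
      have hL0 : L x ≠ 0 := ne_of_gt (hLpos x hx)
      field_simp
    have h2 : Tendsto (fun x => c ^ (-α) * (L (c * x) / L x)) atTop (𝓝 (c ^ (-α) * 1)) :=
      (hLslow c hc).const_mul _
    rw [mul_one] at h2
    exact h2.congr' h1
  have h2α1 : (1:ℝ) < 2 ^ α := (Real.one_lt_rpow_iff_of_pos two_pos).2 (Or.inl ⟨one_lt_two, hα0⟩)
  have h2αn : (2:ℝ) ^ α < 2 ^ (n+1) := by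
    calc (2:ℝ) ^ α < 2 ^ (((n+1:ℕ)):ℝ) :=
          (Real.rpow_lt_rpow_left_iff one_lt_two).2 (by push_cast; linarith)
      _ = 2 ^ (n+1) := Real.rpow_natCast 2 (n+1)
  set K : ℝ := ((2:ℝ) ^ α + 2 ^ (n+1)) / 2 with hKdef
  have hK1 : (2:ℝ) ^ α < K := by rw [hKdef]; linarith
  have hK2 : K < 2 ^ (n+1) := by rw [hKdef]; linarith
  have hK0 : 0 < K := by nlinarith [h2α1]
  have hKt_ev : ∀ᶠ x in atTop, t x ≤ K * t (2*x) := by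
    have hlim : (1:ℝ)/K < 2 ^ (-α) := by
      rw [Real.rpow_neg two_pos.le, ← one_div]
      exact one_div_lt_one_div_of_lt (by positivity) hK1
    filter_upwards [(hratio 2 two_pos).eventually_const_lt hlim,
      eventually_gt_atTop 0] with x h1 h2
    have htx : 0 < t x := htpos x h2
    rw [div_lt_div_iff₀ hK0 htx] at h1
    linarith [h1]
  have hdiff_ev : ∀ᶠ x in atTop, ((2:ℝ)^α - 1)/2 * t x ≤ t (x/2) - t x := by
    have hval : ((1:ℝ)/2) ^ (-α) = (2:ℝ) ^ α := by
      rw [one_div, Real.inv_rpow two_pos.le, Real.rpow_neg two_pos.le, inv_inv]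
    have h := hratio (1/2) (by norm_num)
    rw [hval] at h
    have hlim : ((2:ℝ)^α + 1)/2 < 2 ^ α := by linarith [h2α1]
    filter_upwards [h.eventually_const_lt hlim, eventually_gt_atTop 0] with x h1 h2
    have htx : 0 < t x := htpos x h2
    have hx2 : (1/2 : ℝ) * x = x / 2 := by ring
    rw [hx2, div_lt_div_iff₀ two_pos htx] at h1
    linarith [h1]
  obtain ⟨x1, hx1⟩ := eventually_atTop.1 hKt_ev
  set x0 : ℝ := max x1 1 with hx0def
  have hx0_1 : (1:ℝ) ≤ x0 := le_max_right _ _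
  have hx0pos : (0:ℝ) < x0 := lt_of_lt_of_le one_pos hx0_1
  have hKt : ∀ x, x0 ≤ x → t x ≤ K * t (2*x) :=
    fun x hx => hx1 x (le_trans (le_max_left _ _) hx)
  have hb : Tendsto (fun T => T ^ (n+1) * t T) atTop atTop :=
    pow_mul_t_tendsto ht_anti ht0 n hx0_1 hK0 hK2 (htpos x0 hx0pos) hKt
  set C1 : ℝ := K / ((n+1) * (1 - K / 2 ^ (n+1))) with hC1def
  have hq1 : K / 2 ^ (n+1) < 1 := (div_lt_one (by positivity)).2 hK2
  have hC1pos : 0 < C1 := by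
    rw [hC1def]
    have h1 : (0:ℝ) < 1 - K / 2^(n+1) := by linarith
    positivity
  set CG : ℝ := 1 + (n+1) * C1 + (2*n+2)! with hCGdef
  have hCGpos : 0 < CG := by rw [hCGdef]; positivity
  set cD : ℝ := (Real.exp (-1) / 2 ^ (n+1)) * (((2:ℝ)^α - 1)/2) with hcDdef
  have hcDpos : 0 < cD := by
    rw [hcDdef]
    have h1 : 0 < (2:ℝ)^α - 1 := by linarith
    positivity
  -- eventual upper bound for G
  have hG_ev : ∀ᶠ s in 𝓝[>] (0:ℝ),
      ∫ z in Ioi (0:ℝ), ((n+1:ℝ) * (z ^ n * Real.exp (-(s*z)))) * t z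
        ≤ CG * ((s⁻¹) ^ (n+1) * t s⁻¹) := by
    have hev : ∀ᶠ T in atTop, x0 ≤ T ∧ x0 ^ (n+1) ≤ T ^ (n+1) * t T :=
      (eventually_ge_atTop x0).and (hb.eventually_ge_atTop (x0 ^ (n+1)))
    filter_upwards [tendsto_inv_nhdsGT_zero.eventually hev, self_mem_nhdsWithin] with s hsev hs
    obtain ⟨hTx0, hbT⟩ := hsev
    have hs0 : (0:ℝ) < s := hs
    have hT0 : (0:ℝ) < s⁻¹ := by positivity
    have hT1 : (1:ℝ) ≤ s⁻¹ := le_trans hx0_1 hTx0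
    have hIoc0 : IntegrableOn (fun z => ((n+1:ℝ) * (z ^ n * Real.exp (-(s*z)))) * t z)
        (Ioc 0 x0) := integrableOn_Ft ht_meas ht0 ht1 n hs0 Ioc_subset_Ioi_self measurableSet_Ioc
    have hIocm : IntegrableOn (fun z => ((n+1:ℝ) * (z ^ n * Real.exp (-(s*z)))) * t z)
        (Ioc x0 s⁻¹) := integrableOn_Ft ht_meas ht0 ht1 n hs0
          (Ioc_subset_Ioi_self.trans (Ioi_subset_Ioi hx0pos.le)) measurableSet_Ioc
    have hIoiT : IntegrableOn (fun z => ((n+1:ℝ) * (z ^ n * Real.exp (-(s*z)))) * t z)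
        (Ioi s⁻¹) := integrableOn_Ft ht_meas ht0 ht1 n hs0
          (Ioi_subset_Ioi hT0.le) measurableSet_Ioi
    have hIocT : IntegrableOn (fun z => ((n+1:ℝ) * (z ^ n * Real.exp (-(s*z)))) * t z)
        (Ioc 0 s⁻¹) := integrableOn_Ft ht_meas ht0 ht1 n hs0
          Ioc_subset_Ioi_self measurableSet_Ioc
    have hsplit : ∫ z in Ioi (0:ℝ), ((n+1:ℝ) * (z ^ n * Real.exp (-(s*z)))) * t z
        = ((∫ z in Ioc (0:ℝ) x0, ((n+1:ℝ) * (z ^ n * Real.exp (-(s*z)))) * t z)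
          + ∫ z in Ioc x0 s⁻¹, ((n+1:ℝ) * (z ^ n * Real.exp (-(s*z)))) * t z)
          + ∫ z in Ioi s⁻¹, ((n+1:ℝ) * (z ^ n * Real.exp (-(s*z)))) * t z := by
      rw [← setIntegral_union (Ioc_disjoint_Ioc_of_le le_rfl) measurableSet_Ioc hIoc0 hIocm,
        Ioc_union_Ioc_eq_Ioc hx0pos.le hTx0,
        ← setIntegral_union (Ioc_disjoint_Ioi le_rfl) measurableSet_Ioi hIocT hIoiT,
        Ioc_union_Ioi_eq_Ioi hT0.le]
    have hpiece1 : ∫ z in Ioc (0:ℝ) x0, ((n+1:ℝ) * (z ^ n * Real.exp (-(s*z)))) * t z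
        ≤ s⁻¹ ^ (n+1) * t s⁻¹ :=
      le_trans (head_piece ht_meas ht0 ht1 n hs0 hx0pos.le) hbT
    have hpiece2 : ∫ z in Ioc x0 s⁻¹, ((n+1:ℝ) * (z ^ n * Real.exp (-(s*z)))) * t z
        ≤ (n+1) * (C1 * (s⁻¹ ^ (n+1) * t s⁻¹)) := by
      have hint3 : IntegrableOn (fun z => (n+1:ℝ) * (z ^ n * t z)) (Ioc x0 s⁻¹) := by
        refine Integrable.mono'
          (integrableOn_const measure_Ioc_lt_top.ne :
            IntegrableOn (fun _ => (n+1:ℝ) * (s⁻¹ ^ n * 1)) _ _) ?_ ?_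
        · have : Measurable fun z => (n+1:ℝ) * (z ^ n * t z) := by fun_prop
          exact this.aestronglyMeasurable
        · refine (ae_restrict_iff' measurableSet_Ioc).2 (Eventually.of_forall fun z hz => ?_)
          have hz0 : 0 < z := lt_of_lt_of_le hx0pos hz.1.le
          rw [Real.norm_of_nonneg (mul_nonneg (by positivity)
            (mul_nonneg (pow_nonneg hz0.le n) (ht0 z)))]
          have h1 : z ^ n ≤ s⁻¹ ^ n := pow_le_pow_left₀ hz0.le hz.2 n
          have h2 : z ^ n * t z ≤ s⁻¹ ^ n * 1 :=
            mul_le_mul h1 (ht1 z) (ht0 z) (by positivity)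
          nlinarith [h2]
      calc ∫ z in Ioc x0 s⁻¹, ((n+1:ℝ) * (z ^ n * Real.exp (-(s*z)))) * t z
          ≤ ∫ z in Ioc x0 s⁻¹, (n+1:ℝ) * (z ^ n * t z) := by
            refine setIntegral_mono_on hIocm hint3 measurableSet_Ioc fun z hz => ?_
            have hz0 : 0 < z := lt_of_lt_of_le hx0pos hz.1.le
            have he : Real.exp (-(s*z)) ≤ 1 := Real.exp_le_one_iff.2 (by nlinarith)
            have hzn : (0:ℝ) ≤ z ^ n := pow_nonneg hz0.le n
            calc ((n+1:ℝ) * (z ^ n * Real.exp (-(s*z)))) * t z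
                ≤ ((n+1:ℝ) * (z ^ n * 1)) * t z := by
                  refine mul_le_mul_of_nonneg_right ?_ (ht0 z)
                  refine mul_le_mul_of_nonneg_left ?_ (by positivity)
                  exact mul_le_mul_of_nonneg_left he hzn
              _ = (n+1:ℝ) * (z ^ n * t z) := by ring
        _ = (n+1:ℝ) * ∫ z in Ioc x0 s⁻¹, z ^ n * t z := integral_const_mul _ _
        _ ≤ (n+1) * (C1 * (s⁻¹ ^ (n+1) * t s⁻¹)) := by
            refine mul_le_mul_of_nonneg_left ?_ (by positivity)
            exact karamata_upper ht_anti ht0 ht_meas n hx0_1 hK0 hK2 hKt s⁻¹ hTx0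
    have hpiece3 : ∫ z in Ioi s⁻¹, ((n+1:ℝ) * (z ^ n * Real.exp (-(s*z)))) * t z
        ≤ ((2*n+2)! : ℝ) * (s⁻¹ ^ (n+1) * t s⁻¹) :=
      tail_piece ht_meas ht_anti ht0 ht1 n hs0 rfl hT1
    rw [hsplit]
    have hCGrw : (1 + ((n:ℝ)+1) * C1 + ((2*n+2)! : ℝ)) * (s⁻¹ ^ (n+1) * t s⁻¹)
        = CG * (s⁻¹ ^ (n+1) * t s⁻¹) := by rw [hCGdef]
    rw [← hCGrw]
    linarith [hpiece1, hpiece2, hpiece3]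
  -- eventual lower bound for D
  have hD_ev : ∀ᶠ s in 𝓝[>] (0:ℝ), cD * ((s⁻¹) ^ (n+1) * t s⁻¹)
      ≤ ∫ ω, Y ω ^ (n+1) * Real.exp (-s * Y ω) ∂P := by
    have hev2 : ∀ᶠ T in atTop, (1 ≤ T) ∧ (((2:ℝ)^α - 1)/2 * t T ≤ t (T/2) - t T) :=
      (eventually_ge_atTop 1).and hdiff_ev
    filter_upwards [tendsto_inv_nhdsGT_zero.eventually hev2, self_mem_nhdsWithin] with s hsev hs
    obtain ⟨hT1, hdiff⟩ := hsev
    have h := D_lower P Y hYmeas hYnn n (hs : (0:ℝ) < s) rfl hT1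
      (by linarith [h2α1] : (0:ℝ) ≤ ((2:ℝ)^α - 1)/2) hdiff
    rw [hcDdef]
    exact h
  -- the littleO statement
  rw [isLittleO_iff]
  intro c hc
  set ε' : ℝ := c * cD / (2 * CG) with hε'
  have hε'pos : 0 < ε' := by rw [hε']; positivity
  obtain ⟨A0, hA0⟩ := eventually_atTop.1 (hXo.def hε'pos)
  set A : ℝ := max A0 1 with hAdef
  have hA1 : (1:ℝ) ≤ A := le_max_right _ _
  have hApos : (0:ℝ) < A := lt_of_lt_of_le one_pos hA1
  have hA' : ∀ z, A ≤ z → tX z ≤ ε' * t z := by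
    intro z hz
    have h := hA0 z (le_trans (le_max_left _ _) hz)
    rwa [Real.norm_of_nonneg (htX0 z), Real.norm_of_nonneg (ht0 z)] at h
  have hN : ∀ s : ℝ, 0 < s → ∫ ω, X ω ^ (n+1) * Real.exp (-s * X ω) ∂P
      ≤ A ^ (n+1) + ε' * ∫ z in Ioi (0:ℝ), ((n+1:ℝ) * (z ^ n * Real.exp (-(s*z)))) * t z := by
    intro s hs
    have h1 := expect_le P X hXmeas hXnn n hs
    have hIA1 : IntegrableOn (fun z => ((n+1:ℝ) * (z ^ n * Real.exp (-(s*z)))) * tX z)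
        (Ioc 0 A) := integrableOn_Ft htX_meas htX0 htX1 n hs Ioc_subset_Ioi_self measurableSet_Ioc
    have hIA2 : IntegrableOn (fun z => ((n+1:ℝ) * (z ^ n * Real.exp (-(s*z)))) * tX z)
        (Ioi A) := integrableOn_Ft htX_meas htX0 htX1 n hs
          (Ioi_subset_Ioi hApos.le) measurableSet_Ioi
    have e3 : ∫ z in Ioi (0:ℝ), ((n+1:ℝ) * (z ^ n * Real.exp (-(s*z)))) * tX z
        = (∫ z in Ioc (0:ℝ) A, ((n+1:ℝ) * (z ^ n * Real.exp (-(s*z)))) * tX z)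
          + ∫ z in Ioi A, ((n+1:ℝ) * (z ^ n * Real.exp (-(s*z)))) * tX z := by
      rw [← setIntegral_union (Ioc_disjoint_Ioi le_rfl) measurableSet_Ioi hIA1 hIA2,
        Ioc_union_Ioi_eq_Ioi hApos.le]
    have h4 : ∫ z in Ioc (0:ℝ) A, ((n+1:ℝ) * (z ^ n * Real.exp (-(s*z)))) * tX z ≤ A^(n+1) :=
      head_piece htX_meas htX0 htX1 n hs hApos.le
    have h5 : ∫ z in Ioi A, ((n+1:ℝ) * (z ^ n * Real.exp (-(s*z)))) * tX z
        ≤ ε' * ∫ z in Ioi (0:ℝ), ((n+1:ℝ) * (z ^ n * Real.exp (-(s*z)))) * t z := by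
      have hIt : IntegrableOn (fun z => ((n+1:ℝ) * (z ^ n * Real.exp (-(s*z)))) * t z)
          (Ioi (0:ℝ)) := integrableOn_Ft ht_meas ht0 ht1 n hs (subset_refl _) measurableSet_Ioi
      have hIt2 : IntegrableOn (fun z => ε' * (((n+1:ℝ) * (z ^ n * Real.exp (-(s*z)))) * t z))
          (Ioi A) := (hIt.mono_set (Ioi_subset_Ioi hApos.le)).const_mul _
      calc ∫ z in Ioi A, ((n+1:ℝ) * (z ^ n * Real.exp (-(s*z)))) * tX z
          ≤ ∫ z in Ioi A, ε' * (((n+1:ℝ) * (z ^ n * Real.exp (-(s*z)))) * t z) := by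
            refine setIntegral_mono_on hIA2 hIt2 measurableSet_Ioi fun z hz => ?_
            have hz0 : 0 < z := lt_trans hApos hz
            have hFnn : (0:ℝ) ≤ (n+1:ℝ) * (z ^ n * Real.exp (-(s*z))) := by
              have := pow_nonneg hz0.le n
              positivity
            calc ((n+1:ℝ) * (z ^ n * Real.exp (-(s*z)))) * tX z
                ≤ ((n+1:ℝ) * (z ^ n * Real.exp (-(s*z)))) * (ε' * t z) :=
                  mul_le_mul_of_nonneg_left (hA' z (le_of_lt hz)) hFnn
              _ = ε' * (((n+1:ℝ) * (z ^ n * Real.exp (-(s*z)))) * t z) := by ring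
        _ = ε' * ∫ z in Ioi A, ((n+1:ℝ) * (z ^ n * Real.exp (-(s*z)))) * t z :=
            integral_const_mul _ _
        _ ≤ ε' * ∫ z in Ioi (0:ℝ), ((n+1:ℝ) * (z ^ n * Real.exp (-(s*z)))) * t z := by
            refine mul_le_mul_of_nonneg_left ?_ hε'pos.le
            refine setIntegral_mono_set hIt ?_ ?_
            · refine (ae_restrict_iff' measurableSet_Ioi).2 (Eventually.of_forall fun z hz => ?_)
              have hz0 : (0:ℝ) < z := hz
              exact mul_nonneg (mul_nonneg (by positivity)
                (mul_nonneg (pow_nonneg hz0.le n) (Real.exp_pos _).le)) (ht0 z)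
            · exact HasSubset.Subset.eventuallyLE (Ioi_subset_Ioi hApos.le)
    linarith [h1, e3.symm.le, h4, h5]
  have hbig : ∀ᶠ s in 𝓝[>] (0:ℝ),
      2 * A^(n+1) / (c * cD) ≤ (s⁻¹)^(n+1) * t s⁻¹ :=
    tendsto_inv_nhdsGT_zero.eventually (hb.eventually_ge_atTop _)
  filter_upwards [hG_ev, hD_ev, hbig, self_mem_nhdsWithin] with s hG hD hbigs hs
  have hs0 : (0:ℝ) < s := hs
  have hbTnn : 0 ≤ (s⁻¹)^(n+1) * t s⁻¹ := mul_nonneg (by positivity) (ht0 _)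
  have hNpos : 0 ≤ ∫ ω, X ω ^ (n+1) * Real.exp (-s * X ω) ∂P :=
    integral_nonneg fun ω => mul_nonneg (pow_nonneg (hXnn ω) _) (Real.exp_pos _).le
  have hDpos : 0 ≤ ∫ ω, Y ω ^ (n+1) * Real.exp (-s * Y ω) ∂P :=
    integral_nonneg fun ω => mul_nonneg (pow_nonneg (hYnn ω) _) (Real.exp_pos _).le
  rw [Real.norm_of_nonneg hNpos, Real.norm_of_nonneg hDpos]
  have he1 : ε' * CG = c * cD / 2 := by
    rw [hε']
    field_simp
  have he2 : A ^ (n+1) ≤ c * cD / 2 * ((s⁻¹)^(n+1) * t s⁻¹) := by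
    have h := mul_le_mul_of_nonneg_left hbigs (by positivity : (0:ℝ) ≤ c * cD / 2)
    have he : c * cD / 2 * (2 * A^(n+1) / (c * cD)) = A^(n+1) := by
      field_simp
    linarith [h, he.symm.le]
  have hGnn : 0 ≤ ∫ z in Ioi (0:ℝ), ((n+1:ℝ) * (z ^ n * Real.exp (-(s*z)))) * t z := by
    refine setIntegral_nonneg measurableSet_Ioi fun z hz => ?_
    have hz0 : (0:ℝ) < z := hz
    have := pow_nonneg hz0.le n
    have := ht0 z
    positivity
  calc ∫ ω, X ω ^ (n+1) * Real.exp (-s * X ω) ∂P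
      ≤ A ^ (n+1) + ε' * ∫ z in Ioi (0:ℝ), ((n+1:ℝ) * (z ^ n * Real.exp (-(s*z)))) * t z :=
        hN s hs0
    _ ≤ A ^ (n+1) + ε' * (CG * ((s⁻¹)^(n+1) * t s⁻¹)) := by
        refine add_le_add le_rfl (mul_le_mul_of_nonneg_left hG hε'pos.le)
    _ = A ^ (n+1) + (c * cD / 2) * ((s⁻¹)^(n+1) * t s⁻¹) := by rw [← he1]; ring
    _ ≤ (c * cD / 2) * ((s⁻¹)^(n+1) * t s⁻¹) + (c * cD / 2) * ((s⁻¹)^(n+1) * t s⁻¹) := by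
        linarith [he2]
    _ = c * (cD * ((s⁻¹)^(n+1) * t s⁻¹)) := by ring
    _ ≤ c * ∫ ω, Y ω ^ (n+1) * Real.exp (-s * Y ω) ∂P :=
        mul_le_mul_of_nonneg_left hD hc.le
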